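/- Any intersecting strict Minkowski arrangement of Euclidean disks in the plane has at most 5 members. Equivalently: if p_1, …, p_6 are six pairwise distinct points in the Euclidean plane ℝ², ρ_1, …, ρ_6 > 0, and there is a point b contained in all six closed Euclidean disks of radius ρ_i centered at p_i (i.e., ‖b − p_i‖ ≤ ρ_i for all i), then some disk contains the center of another, i.e., there exist indices i ≠ j with ‖p_j − p_i‖ ≤ ρ_i. -/

import Mathlib

open Real Complex

private lemma cos_ge_half_of_abs_le_aux {x : ℝ} (h : |x| ≤ π / 3) : 1/2 ≤ Real.cos x := by
  rw [← Real.cos_abs x, ← Real.cos_pi_div_three]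
  exact Real.cos_le_cos_of_nonneg_of_le_pi (abs_nonneg x)
    (by linarith [Real.pi_pos]) h

private lemma dist_le_max_of_cos_aux (z w : ℂ) (h : 1/2 ≤ Real.cos (w.arg - z.arg)) :
    ‖w - z‖ ≤ max (‖z‖) (‖w‖) := by
  have hz := Complex.norm_mul_cos_add_sin_mul_I z
  have hw := Complex.norm_mul_cos_add_sin_mul_I w
  set a := ‖z‖ with ha
  set bb := ‖w‖ with hb
  have hzre : z.re = a * Real.cos z.arg := by
    conv_lhs => rw [← hz]
    simp [Complex.mul_re, Complex.mul_im, Complex.add_re, Complex.add_im,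
      Complex.cos_ofReal_re, Complex.sin_ofReal_re]
  have hzim : z.im = a * Real.sin z.arg := by
    conv_lhs => rw [← hz]
    simp [Complex.mul_re, Complex.mul_im, Complex.add_re, Complex.add_im,
      Complex.cos_ofReal_re, Complex.sin_ofReal_re]
  have hwre : w.re = bb * Real.cos w.arg := by
    conv_lhs => rw [← hw]
    simp [Complex.mul_re, Complex.mul_im, Complex.add_re, Complex.add_im,
      Complex.cos_ofReal_re, Complex.sin_ofReal_re]
  have hwim : w.im = bb * Real.sin w.arg := by
    conv_lhs => rw [← hw]
    simp [Complex.mul_re, Complex.mul_im, Complex.add_re, Complex.add_im,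
      Complex.cos_ofReal_re, Complex.sin_ofReal_re]
  have h1 : Real.sin z.arg ^ 2 + Real.cos z.arg ^ 2 = 1 := Real.sin_sq_add_cos_sq _
  have h2 : Real.sin w.arg ^ 2 + Real.cos w.arg ^ 2 = 1 := Real.sin_sq_add_cos_sq _
  have ha0 : 0 ≤ a := norm_nonneg z
  have hb0 : 0 ≤ bb := norm_nonneg w
  have hA : (w.re - z.re)^2 + (w.im - z.im)^2
      = a^2 + bb^2 - 2*a*bb*Real.cos (w.arg - z.arg) := by
    rw [hzre, hzim, hwre, hwim, Real.cos_sub]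
    linear_combination a^2 * h1 + bb^2 * h2
  have hsq : (‖w - z‖)^2 ≤ (max a bb)^2 := by
    rw [Complex.sq_norm, Complex.normSq_apply, Complex.sub_re, Complex.sub_im]
    have hcc : 0 ≤ a * bb * (Real.cos (w.arg - z.arg) - 1/2) :=
      mul_nonneg (mul_nonneg ha0 hb0) (by linarith)
    rcases le_total a bb with hab | hab
    · rw [max_eq_right hab]
      nlinarith [hA, mul_nonneg ha0 (by linarith : (0:ℝ) ≤ bb - a)]
    · rw [max_eq_left hab]
      nlinarith [hA, mul_nonneg hb0 (by linarith : (0:ℝ) ≤ a - bb)]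
  have hmax : 0 ≤ max a bb := le_trans ha0 (le_max_left _ _)
  have := Real.sqrt_le_sqrt hsq
  rwa [Real.sqrt_sq (norm_nonneg _), Real.sqrt_sq hmax] at this

private lemma pigeon5_aux (a : Fin 5 → ℝ) (h : ∀ i, a i ∈ Set.Ioo (π/3) (5*π/3)) :
    ∃ i j, i ≠ j ∧ |a i - a j| < π/3 := by
  have hπ := Real.pi_pos
  have hmaps : ∀ i ∈ Finset.univ (α := Fin 5), ⌈a i * 3 / π⌉ ∈ Finset.Icc (2:ℤ) 5 := by
    intro i _
    obtain ⟨h1, h2⟩ := h i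
    have hlo : (1:ℤ) < ⌈a i * 3 / π⌉ := by
      rw [Int.lt_ceil]
      push_cast
      rw [lt_div_iff₀ hπ]
      nlinarith
    have hhi : ⌈a i * 3 / π⌉ ≤ 5 := by
      rw [Int.ceil_le]
      push_cast
      rw [div_le_iff₀ hπ]
      nlinarith
    rw [Finset.mem_Icc]
    omega
  have hcard : (Finset.Icc (2:ℤ) 5).card < (Finset.univ (α := Fin 5)).card := by
    simp [Int.card_Icc]
  obtain ⟨i, _, j, _, hij, hfe⟩ :=
    Finset.exists_ne_map_eq_of_card_lt_of_maps_to hcard hmaps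
  refine ⟨i, j, hij, ?_⟩
  have l1 := Int.le_ceil (a i * 3 / π)
  have l2 := Int.ceil_lt_add_one (a i * 3 / π)
  have l3 := Int.le_ceil (a j * 3 / π)
  have l4 := Int.ceil_lt_add_one (a j * 3 / π)
  rw [hfe] at l1 l2
  have e1 : (a i - a j) * 3 / π < 1 := by
    rw [show (a i - a j) * 3 / π = a i * 3 / π - a j * 3 / π by ring]; linarith
  have e2 : (a j - a i) * 3 / π < 1 := by
    rw [show (a j - a i) * 3 / π = a j * 3 / π - a i * 3 / π by ring]; linarith
  rw [div_lt_one hπ] at e1 e2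
  rw [abs_lt]
  constructor <;> linarith

private lemma exists_pair_cos_aux (w : Fin 6 → ℂ) :
    ∃ i j : Fin 6, i ≠ j ∧ 1/2 ≤ Real.cos ((w j).arg - (w i).arg) := by
  have hπ := Real.pi_pos
  by_cases hc : ∃ j : Fin 5, 1/2 ≤ Real.cos ((w j.succ).arg - (w 0).arg)
  · obtain ⟨j, hj⟩ := hc
    exact ⟨0, j.succ, (Fin.succ_ne_zero j).symm, hj⟩
  · push_neg at hc
    set χ : Fin 5 → ℝ := fun j =>
      if (w j.succ).arg - (w 0).arg ≤ π/3 then (w j.succ).arg - (w 0).arg + 2*π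
      else (w j.succ).arg - (w 0).arg with hχdef
    have hbound : ∀ i : Fin 6, -π < (w i).arg ∧ (w i).arg ≤ π := fun i =>
      ⟨Complex.neg_pi_lt_arg _, Complex.arg_le_pi _⟩
    have hmem : ∀ j, χ j ∈ Set.Ioo (π/3) (5*π/3) := by
      intro j
      have hcj := hc j
      obtain ⟨b1, b2⟩ := hbound j.succ
      obtain ⟨b3, b4⟩ := hbound 0
      by_cases hle : (w j.succ).arg - (w 0).arg ≤ π/3
      · simp only [hχdef, if_pos hle]
        constructor
        · by_contra hcon
          push_neg at hcon
          have : 1/2 ≤ Real.cos ((w j.succ).arg - (w 0).arg) := by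
            rw [← Real.cos_add_two_pi]
            apply cos_ge_half_of_abs_le_aux
            rw [abs_le]; constructor <;> linarith
          linarith
        · by_contra hcon
          push_neg at hcon
          have : 1/2 ≤ Real.cos ((w j.succ).arg - (w 0).arg) := by
            apply cos_ge_half_of_abs_le_aux
            rw [abs_le]; constructor <;> linarith
          linarith
      · have hlt := not_le.mp hle
        simp only [hχdef, if_neg hle]
        refine ⟨hlt, ?_⟩
        by_contra hcon
        push_neg at hcon
        have : 1/2 ≤ Real.cos ((w j.succ).arg - (w 0).arg) := by
          rw [← Real.cos_sub_two_pi]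
          apply cos_ge_half_of_abs_le_aux
          rw [abs_le]; constructor <;> linarith
        linarith
    obtain ⟨j, k, hjk, habs⟩ := pigeon5_aux χ hmem
    have hcos : 1/2 ≤ Real.cos (χ j - χ k) := cos_ge_half_of_abs_le_aux (le_of_lt habs)
    have heq : Real.cos ((w j.succ).arg - (w k.succ).arg) = Real.cos (χ j - χ k) := by
      simp only [hχdef]
      by_cases h1 : (w j.succ).arg - (w 0).arg ≤ π/3 <;>
        by_cases h2 : (w k.succ).arg - (w 0).arg ≤ π/3
      · simp only [if_pos h1, if_pos h2]; congr 1; ring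
      · simp only [if_pos h1, if_neg h2]
        rw [show (w j.succ).arg - (w 0).arg + 2*π - ((w k.succ).arg - (w 0).arg)
            = ((w j.succ).arg - (w k.succ).arg) + 2*π by ring, Real.cos_add_two_pi]
      · simp only [if_neg h1, if_pos h2]
        rw [show (w j.succ).arg - (w 0).arg - ((w k.succ).arg - (w 0).arg + 2*π)
            = ((w j.succ).arg - (w k.succ).arg) - 2*π by ring, Real.cos_sub_two_pi]
      · simp only [if_neg h1, if_neg h2]; congr 1; ring
    exact ⟨k.succ, j.succ, fun hcon => hjk (Fin.succ_injective _ hcon.symm),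
      heq ▸ hcos⟩

/-- An intersecting strict Minkowski arrangement of Euclidean disks in the
plane has at most 5 members: among six distinct disks sharing a common point,
some disk contains the center of another. -/
theorem stmt_6 (p : Fin 6 → EuclideanSpace ℝ (Fin 2))
    (hp : Function.Injective p) (ρ : Fin 6 → ℝ) (hρ : ∀ i, 0 < ρ i)
    (b : EuclideanSpace ℝ (Fin 2)) (hb : ∀ i, dist b (p i) ≤ ρ i) :
    ∃ i j, i ≠ j ∧ dist (p j) (p i) ≤ ρ i := by
  set w : Fin 6 → ℂ := fun i => ⟨p i 0 - b 0, p i 1 - b 1⟩ with hwdef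
  have habs : ∀ i, ‖w i‖ = dist b (p i) := by
    intro i
    rw [EuclideanSpace.dist_eq, Fin.sum_univ_two, Complex.norm_def,
      Complex.normSq_apply]
    congr 1
    simp only [hwdef, Real.dist_eq, _root_.sq_abs]
    ring
  have hdist : ∀ i j, dist (p j) (p i) = ‖w j - w i‖ := by
    intro i j
    rw [EuclideanSpace.dist_eq, Fin.sum_univ_two, Complex.norm_def,
      Complex.normSq_apply, Complex.sub_re, Complex.sub_im]
    congr 1
    simp only [hwdef, Real.dist_eq, _root_.sq_abs]
    ring
  obtain ⟨i, j, hij, hcos⟩ := exists_pair_cos_aux w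
  have hmax := dist_le_max_of_cos_aux (w i) (w j) hcos
  rcases le_total (‖w j‖) (‖w i‖) with hle | hle
  · refine ⟨i, j, hij, ?_⟩
    rw [hdist i j]
    calc ‖w j - w i‖ ≤ max (‖w i‖) (‖w j‖) := hmax
      _ = ‖w i‖ := max_eq_left hle
      _ = dist b (p i) := habs i
      _ ≤ ρ i := hb i
  · refine ⟨j, i, hij.symm, ?_⟩
    rw [hdist j i]
    calc ‖w i - w j‖ = ‖w j - w i‖ := by
          rw [← norm_neg]; congr 1; ring
      _ ≤ max (‖w i‖) (‖w j‖) := hmax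
      _ = ‖w j‖ := max_eq_right hle
      _ = dist b (p j) := habs j
      _ ≤ ρ j := hb j
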